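/- arXiv:2401.07986 — 2 statements merged into one kernel-verified Lean document; each statement's English description precedes it below -/
import Mathlib

section
/- Let q ≥ 3 be a prime power, r a prime dividing q−1, and ε ∈ (0,1/2). For all q larger than an explicit constant C(ε) = 6^{1/ε}, there exists an F_r-linear code of length q, dimension ⌊q^{1/2−ε}⌋, and minimum distance at least (r−1)q/r − 2q^{1−ε}. -/
open Finset Real

set_option maxHeartbeats 1000000

namespace ShadowAux

/-- Sum over all functions of a product equals power of the sum. -/
lemma sum_fn_prod {S : Type*} [Fintype S] (g : S → ℝ) (n : ℕ) :
    ∑ W : Fin n → S, ∏ i, g (W i) = (∑ s : S, g s) ^ n := by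
  induction n with
  | zero => simp
  | succ n ih =>
    have h := Equiv.sum_comp (Fin.consEquiv (fun _ : Fin (n+1) => S))
      (fun W : Fin (n+1) → S => ∏ i, g (W i))
    rw [← h, Fintype.sum_prod_type]
    have : ∀ (s : S) (G : Fin n → S),
        (∏ i, g ((Fin.consEquiv (fun _ : Fin (n+1) => S)) (s, G) i))
          = g s * ∏ i, g (G i) := by
      intro s G
      rw [Fin.prod_univ_succ]
      simp [Fin.consEquiv]
    simp_rw [this]
    simp_rw [← Finset.mul_sum, ih, pow_succ]
    rw [← Finset.sum_mul]
    ring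



lemma card_ker_mul {r k : ℕ} (hr : r.Prime) [NeZero r] (v : Fin k → ZMod r) (hv : v ≠ 0) :
    (Finset.univ.filter fun w : Fin k → ZMod r => ∑ j, w j * v j = 0).card * r = r ^ k := by
  haveI := Fact.mk hr
  obtain ⟨j₀, hj₀⟩ : ∃ j, v j ≠ 0 := by
    by_contra h
    push_neg at h
    exact hv (funext h)
  set f : (Fin k → ZMod r) → ZMod r := fun w => ∑ j, w j * v j with hf
  set c : Fin k → ZMod r := fun j => if j = j₀ then (v j₀)⁻¹ else 0 with hc
  have hfc : f c = 1 := by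
    simp only [hf, hc]
    rw [Finset.sum_eq_single j₀]
    · simp [inv_mul_cancel₀ hj₀]
    · intro b _ hb; simp [hb]
    · intro hb; exact absurd (Finset.mem_univ j₀) hb
  have hadd : ∀ w w' : Fin k → ZMod r, f (w + w') = f w + f w' := by
    intro w w'
    simp only [hf, Pi.add_apply, add_mul]
    exact Finset.sum_add_distrib
  have hsmul : ∀ (a : ZMod r) (w : Fin k → ZMod r), f (a • w) = a * f w := by
    intro a w
    simp only [hf, Pi.smul_apply, smul_eq_mul, mul_assoc]
    exact (Finset.mul_sum _ _ _).symm
  have hfiber : ∀ a : ZMod r,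
      (Finset.univ.filter fun w => f w = a).card
        = (Finset.univ.filter fun w => f w = 0).card := by
    intro a
    apply Finset.card_bij (fun w _ => w - a • c)
    · intro w hw
      simp only [Finset.mem_filter, Finset.mem_univ, true_and] at hw ⊢
      have := hadd (w - a • c) (a • c)
      rw [sub_add_cancel] at this
      rw [hsmul, hfc, mul_one, hw] at this
      exact add_right_cancel (a := f (w - a • c)) (b := a) (c := (0:ZMod r)) (by rw [zero_add, ← this])
    · intro w₁ h₁ w₂ h₂ he
      exact sub_left_injective he
    · intro w' hw'
      refine ⟨w' + a • c, Finset.mem_filter.2 ⟨Finset.mem_univ _, ?_⟩, by abel⟩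
      simp only [Finset.mem_filter, Finset.mem_univ, true_and] at hw'
      rw [hadd, hsmul, hfc, mul_one, hw', zero_add]
  have hcard : (r : ℕ) ^ k = ∑ a : ZMod r, (Finset.univ.filter fun w => f w = a).card := by
    rw [← Finset.card_eq_sum_card_fiberwise (fun w _ => Finset.mem_univ (f w))]
    simp [Fintype.card_fun, ZMod.card]
  rw [hcard]
  simp_rw [hfiber]
  rw [Finset.sum_const, Finset.card_univ, ZMod.card, smul_eq_mul, mul_comm]


/-- Choice of the moment parameter `t` making the union bound work. -/
lemma master {q r k : ℕ} {a s B : ℝ}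
    (hr2 : 2 ≤ r) (hrq : (r : ℝ) ≤ q)
    (ha : 0 < a) (hs : 0 < s) (hsq : s * s = q)
    (hk : (k : ℝ) * a ≤ s)
    (hB : B = q / r + 2 * (q / a)) :
    ∃ t : ℝ, 1 ≤ t ∧ ((r : ℝ) ^ k) * (1 + (t - 1) / r) ^ q ≤ t ^ B := by
  have hrpos : (0:ℝ) < r := by positivity
  have hr2' : (2:ℝ) ≤ r := by exact_mod_cast hr2
  have hqpos : (0:ℝ) < q := by
    have : (0:ℝ) < s * s := by positivity
    rwa [hsq] at this
  have hB0 : 0 ≤ B := by rw [hB]; positivity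
  have hk0 : (0:ℝ) ≤ k := by positivity
  have hks : (k:ℝ) ≤ s / a := (le_div_iff₀ ha).2 hk
  have hlogr0 : 0 ≤ Real.log r := Real.log_nonneg (by linarith)
  have hkk : (k:ℝ) ≤ (k:ℝ)^2 := by
    rcases Nat.eq_zero_or_pos k with h | h
    · simp [h]
    · have : (1:ℝ) ≤ k := by exact_mod_cast h
      nlinarith
  by_cases hcase : 3 * (r:ℝ) ≤ 2 * a
  · -- small r : u = r / a
    have hu0 : 0 < (r:ℝ)/a := by positivity
    set u : ℝ := (r:ℝ) / a with hu
    have hu23 : u ≤ 2/3 := by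
      rw [hu, div_le_iff₀ ha]; linarith
    refine ⟨1 + u, by linarith, ?_⟩
    have hsimp : (1 + u - 1 : ℝ) = u := by ring
    rw [hsimp]
    have h1u : (0:ℝ) < 1 + u := by linarith
    have hur0 : (0:ℝ) < u / r := by positivity
    have hx : (0:ℝ) < 1 + u/r := by linarith
    have hLpos : (0:ℝ) < ((r:ℝ) ^ k) * (1 + u / r) ^ q := by positivity
    have hRpos : (0:ℝ) < (1 + u) ^ B := Real.rpow_pos_of_pos h1u B
    rw [← Real.exp_log hLpos, ← Real.exp_log hRpos]
    apply Real.exp_le_exp.2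
    rw [Real.log_mul (by positivity) (by positivity), Real.log_pow, Real.log_pow,
      Real.log_rpow h1u]
    -- piece 1 : q * log(1 + u/r) ≤ q / a
    have p1 : (q:ℝ) * Real.log (1 + u/r) ≤ q / a := by
      have h1 : Real.log (1 + u/r) ≤ u/r := by
        simpa using Real.log_le_sub_one_of_pos hx
      calc (q:ℝ) * Real.log (1 + u/r) ≤ (q:ℝ) * (u/r) :=
            mul_le_mul_of_nonneg_left h1 (le_of_lt hqpos)
        _ = q / a := by rw [hu]; field_simp
    -- piece 2 : B * log (1+u) ≥ q/a + (3/5) * (r*q/(a*a))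
    have p2 : (q:ℝ)/a + (3/5) * ((r:ℝ)*q/(a*a)) ≤ B * Real.log (1 + u) := by
      have hlow : u / (1 + u) ≤ Real.log (1 + u) := by
        have h0 := Real.one_sub_inv_le_log_of_pos h1u
        have he : 1 - (1 + u)⁻¹ = u / (1 + u) := by field_simp; ring
        linarith [he ▸ h0]
      have hBw : B * (u / (1 + u)) = q/a + ((r:ℝ)*q/(a*a)) / (1 + u) := by
        rw [hB, hu]; field_simp; ring
      have hnum : (0:ℝ) ≤ (r:ℝ)*q/(a*a) := by positivity
      have hdiv : (3/5) * ((r:ℝ)*q/(a*a)) ≤ ((r:ℝ)*q/(a*a)) / (1 + u) := by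
        have h1 : (3/5:ℝ) ≤ 1/(1+u) := by
          rw [le_div_iff₀ h1u]; linarith
        calc (3/5) * ((r:ℝ)*q/(a*a)) ≤ (1/(1+u)) * ((r:ℝ)*q/(a*a)) :=
              mul_le_mul_of_nonneg_right h1 hnum
          _ = ((r:ℝ)*q/(a*a)) / (1 + u) := by ring
      calc (q:ℝ)/a + (3/5) * ((r:ℝ)*q/(a*a))
          ≤ q/a + ((r:ℝ)*q/(a*a)) / (1 + u) := by linarith
        _ = B * (u / (1 + u)) := hBw.symm
        _ ≤ B * Real.log (1 + u) := mul_le_mul_of_nonneg_left hlow hB0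
    -- piece 3 : k * log r ≤ (3/5) * (r*q/(a*a))
    have p3 : (k:ℝ) * Real.log r ≤ (3/5) * ((r:ℝ)*q/(a*a)) := by
      have hsqrt : Real.log r ≤ 2 * (Real.sqrt r - 1) := by
        have h1 : Real.log (Real.sqrt r) ≤ Real.sqrt r - 1 :=
          Real.log_le_sub_one_of_pos (Real.sqrt_pos.2 hrpos)
        rw [Real.log_sqrt (le_of_lt hrpos)] at h1
        linarith
      have hlog35 : Real.log r ≤ (3/5) * r := by
        have h2 : Real.sqrt r * Real.sqrt r = r := Real.mul_self_sqrt (le_of_lt hrpos)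
        nlinarith [Real.sqrt_nonneg (r:ℝ), hsqrt, sq_nonneg (Real.sqrt r - 5/3)]
      have hka : (k:ℝ)^2 ≤ q/(a*a) := by
        have h := mul_le_mul hks hks hk0 (by positivity : (0:ℝ) ≤ s/a)
        calc (k:ℝ)^2 = k * k := by ring
          _ ≤ (s/a) * (s/a) := h
          _ = (s*s)/(a*a) := by ring
          _ = q/(a*a) := by rw [hsq]
      calc (k:ℝ) * Real.log r ≤ (k:ℝ) * ((3/5) * r) :=
            mul_le_mul_of_nonneg_left hlog35 hk0
        _ ≤ (k:ℝ)^2 * ((3/5) * r) := by nlinarith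
        _ ≤ (q/(a*a)) * ((3/5) * r) := by nlinarith
        _ = (3/5) * ((r:ℝ)*q/(a*a)) := by ring
    linarith
  · -- large r : u = 1, t = 2
    push_neg at hcase
    refine ⟨2, by norm_num, ?_⟩
    have hsimp : (2 - 1 : ℝ) = 1 := by norm_num
    rw [hsimp]
    have hx : (0:ℝ) < 1 + 1/(r:ℝ) := by positivity
    have hLpos : (0:ℝ) < ((r:ℝ) ^ k) * (1 + 1/(r:ℝ)) ^ q := by positivity
    have hRpos : (0:ℝ) < (2:ℝ) ^ B := Real.rpow_pos_of_pos (by norm_num) B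
    rw [← Real.exp_log hLpos, ← Real.exp_log hRpos]
    apply Real.exp_le_exp.2
    rw [Real.log_mul (by positivity) (by positivity), Real.log_pow, Real.log_pow,
      Real.log_rpow (by norm_num : (0:ℝ) < 2)]
    have hEpos : (0:ℝ) < Real.exp 1 := Real.exp_pos 1
    have hE27 : (2.7182818283:ℝ) < Real.exp 1 := Real.exp_one_gt_d9
    have hlog2 : (0.6931471803:ℝ) < Real.log 2 := Real.log_two_gt_d9
    have hlog2' : Real.log 2 ≤ 1 := by
      have := Real.log_le_sub_one_of_pos (by norm_num : (0:ℝ) < 2); linarith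
    -- piece 1
    have p1 : (q:ℝ) * Real.log (1 + 1/(r:ℝ)) ≤ q / r := by
      have h1 : Real.log (1 + 1/(r:ℝ)) ≤ 1/(r:ℝ) := by
        simpa using Real.log_le_sub_one_of_pos hx
      calc (q:ℝ) * Real.log (1 + 1/(r:ℝ)) ≤ (q:ℝ) * (1/(r:ℝ)) :=
            mul_le_mul_of_nonneg_left h1 (le_of_lt hqpos)
        _ = q / r := by ring
    -- piece 2
    have p2 : (k:ℝ) * Real.log r ≤ (2/Real.exp 1) * ((q:ℝ)/a) := by
      have hlogs : Real.log s ≤ s / Real.exp 1 := by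
        have h1 : Real.log s - 1 + 1 ≤ Real.exp (Real.log s - 1) :=
          Real.add_one_le_exp _
        rw [Real.exp_sub, Real.exp_log hs] at h1
        rw [div_eq_mul_inv] at h1 ⊢
        linarith
      have hlogq : Real.log r ≤ 2 * (s / Real.exp 1) := by
        have h1 : Real.log r ≤ Real.log q := Real.log_le_log hrpos hrq
        have h2 : Real.log q = 2 * Real.log s := by
          rw [← hsq, Real.log_mul (ne_of_gt hs) (ne_of_gt hs)]; ring
        linarith
      calc (k:ℝ) * Real.log r ≤ (s/a) * Real.log r :=
            mul_le_mul_of_nonneg_right hks hlogr0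
        _ ≤ (s/a) * (2 * (s/Real.exp 1)) :=
            mul_le_mul_of_nonneg_left hlogq (by positivity)
        _ = (2/Real.exp 1) * ((s*s)/a) := by field_simp
        _ = (2/Real.exp 1) * ((q:ℝ)/a) := by rw [hsq]
    -- piece 3
    have p3 : (q:ℝ)/r ≤ (3/2) * ((q:ℝ)/a) := by
      have h1 : (q:ℝ)/r ≤ (3*(q:ℝ))/(2*a) := by
        rw [div_le_div_iff₀ hrpos (by positivity)]
        nlinarith
      calc (q:ℝ)/r ≤ (3*(q:ℝ))/(2*a) := h1
        _ = (3/2) * ((q:ℝ)/a) := by ring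
    -- numeric
    have hnum : 2/Real.exp 1 + 3/2 ≤ (7/2) * Real.log 2 := by
      have h1 : 2/Real.exp 1 ≤ 0.736 := by
        rw [div_le_iff₀ hEpos]; nlinarith
      nlinarith
    have hqa0 : (0:ℝ) ≤ (q:ℝ)/a := by positivity
    have hqr0 : (0:ℝ) ≤ (q:ℝ)/r := by positivity
    have hB' : B * Real.log 2 = (q/r) * Real.log 2 + 2 * ((q:ℝ)/a) * Real.log 2 := by
      rw [hB]; ring
    rw [hB']
    have hint1 : ((q:ℝ)/r) * (1 - Real.log 2) ≤ (3/2) * ((q:ℝ)/a) * (1 - Real.log 2) :=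
      mul_le_mul_of_nonneg_right p3 (by linarith)
    have hint2 : (2/Real.exp 1) * ((q:ℝ)/a) + (3/2) * ((q:ℝ)/a)
        ≤ (7/2) * Real.log 2 * ((q:ℝ)/a) := by
      nlinarith [mul_le_mul_of_nonneg_right hnum hqa0]
    nlinarith [p1, p2, hint1, hint2]


/-- Existence of a good generator matrix. -/
lemma exists_good_W {q r k : ℕ} (hr : r.Prime) [NeZero r] (hk1 : 1 ≤ k) {B t : ℝ}
    (hB0 : 0 ≤ B) (ht : 1 ≤ t)
    (hmain : ((r:ℝ) ^ k) * (1 + (t - 1) / r) ^ q ≤ t ^ B) :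
    ∃ W : Fin q → Fin k → ZMod r, ∀ v : Fin k → ZMod r, v ≠ 0 →
      ((Finset.univ.filter fun i : Fin q => ∑ j, W i j * v j = 0).card : ℝ) ≤ B := by
  classical
  have hrpos : (0:ℝ) < r := by
    have := hr.pos; positivity
  have ht0 : (0:ℝ) < t := lt_of_lt_of_le one_pos ht
  have htB : (0:ℝ) < t ^ B := Real.rpow_pos_of_pos ht0 B
  set Z : (Fin q → Fin k → ZMod r) → (Fin k → ZMod r) → ℕ :=
    fun W v => (Finset.univ.filter fun i : Fin q => ∑ j, W i j * v j = 0).card with hZ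
  set M : ℝ := ((r:ℝ)^(k-1) * (t + r - 1)) ^ q with hM
  have hM0 : 0 < M := by
    rw [hM]
    have : (0:ℝ) < t + r - 1 := by linarith
    positivity
  -- the inner one-coordinate sum
  have hinner : ∀ v : Fin k → ZMod r, v ≠ 0 →
      (∑ w : Fin k → ZMod r, (if ∑ j, w j * v j = 0 then t else 1))
        = (r:ℝ)^(k-1) * (t + r - 1) := by
    intro v hv
    have hK := card_ker_mul hr v hv
    set K := (Finset.univ.filter fun w : Fin k → ZMod r => ∑ j, w j * v j = 0).card with hKd
    have hKval : K = r ^ (k-1) := by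
      have h1 : r ^ k = r ^ (k-1) * r := by
        conv_lhs => rw [← Nat.sub_add_cancel hk1]
        rw [pow_succ]
      exact Nat.eq_of_mul_eq_mul_right hr.pos (by rw [hK, h1])
    have hcardS : Fintype.card (Fin k → ZMod r) = r ^ k := by
      simp [Fintype.card_fun, ZMod.card]
    have hKle : K ≤ r ^ k := by
      rw [← hcardS, ← Finset.card_univ]
      exact Finset.card_filter_le _ _
    have hsplit : ∀ w : Fin k → ZMod r,
        (if ∑ j, w j * v j = 0 then t else (1:ℝ))
          = (if ∑ j, w j * v j = 0 then t - 1 else 0) + 1 := by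
      intro w; split <;> ring
    simp_rw [hsplit]
    rw [Finset.sum_add_distrib, Finset.sum_const, Finset.card_univ, hcardS,
      nsmul_eq_mul, mul_one, ← Finset.sum_filter, Finset.sum_const, ← hKd, hKval,
      nsmul_eq_mul]
    push_cast
    have h1 : ((r:ℝ)) ^ k = (r:ℝ) ^ (k-1) * r := by
      conv_lhs => rw [← Nat.sub_add_cancel hk1]
      rw [pow_succ]
    rw [h1]
    ring
  -- per-v bad count bound
  have key : ∀ v : Fin k → ZMod r, v ≠ 0 →
      ((Finset.univ.filter fun W : Fin q → Fin k → ZMod r => B < Z W v).card : ℝ) * t ^ B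
        ≤ M := by
    intro v hv
    have hle1 : ∀ W : Fin q → Fin k → ZMod r, B < Z W v →
        t ^ B ≤ ∏ i, (if ∑ j, W i j * v j = 0 then t else 1) := by
      intro W hW
      have h1 : (∏ i, (if ∑ j, W i j * v j = 0 then t else 1)) = t ^ (Z W v) := by
        rw [Finset.prod_ite, Finset.prod_const, Finset.prod_const, one_pow, mul_one, hZ]
      rw [h1, ← Real.rpow_natCast t (Z W v)]
      exact Real.rpow_le_rpow_of_exponent_le ht (le_of_lt hW)
    calc ((Finset.univ.filter fun W : Fin q → Fin k → ZMod r => B < Z W v).card : ℝ) * t ^ B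
        = ∑ _W ∈ (Finset.univ.filter fun W : Fin q → Fin k → ZMod r => B < Z W v), t ^ B := by
          rw [Finset.sum_const, nsmul_eq_mul]
      _ ≤ ∑ W ∈ (Finset.univ.filter fun W : Fin q → Fin k → ZMod r => B < Z W v),
            ∏ i, (if ∑ j, W i j * v j = 0 then t else 1) := by
          apply Finset.sum_le_sum
          intro W hW
          exact hle1 W (Finset.mem_filter.1 hW).2
      _ ≤ ∑ W : Fin q → Fin k → ZMod r,
            ∏ i, (if ∑ j, W i j * v j = 0 then t else 1) := by
          apply Finset.sum_le_sum_of_subset_of_nonneg (Finset.filter_subset _ _)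
          intro W _ _
          apply Finset.prod_nonneg
          intro i _
          split
          · linarith
          · norm_num
      _ = M := by
          rw [sum_fn_prod (fun w : Fin k → ZMod r =>
            (if ∑ j, w j * v j = 0 then t else 1)) q, hinner v hv, hM]
  -- union bound
  set bad : Finset (Fin q → Fin k → ZMod r) :=
    Finset.univ.filter fun W => ∃ v : Fin k → ZMod r, v ≠ 0 ∧ B < Z W v with hbad
  have hsub : bad ⊆ (Finset.univ.filter fun v : Fin k → ZMod r => v ≠ 0).biUnion
      (fun v => Finset.univ.filter fun W => B < Z W v) := by
    intro W hW
    rw [hbad, Finset.mem_filter] at hW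
    obtain ⟨-, v, hv, hZv⟩ := hW
    apply Finset.mem_biUnion.2
    exact ⟨v, Finset.mem_filter.2 ⟨Finset.mem_univ _, hv⟩,
      Finset.mem_filter.2 ⟨Finset.mem_univ _, hZv⟩⟩
  have hbadcard : (bad.card : ℝ) * t ^ B ≤ ((r:ℝ)^k - 1) * M := by
    have h1 : bad.card ≤ ∑ v ∈ (Finset.univ.filter fun v : Fin k → ZMod r => v ≠ 0),
        (Finset.univ.filter fun W : Fin q → Fin k → ZMod r => B < Z W v).card :=
      le_trans (Finset.card_le_card hsub) (Finset.card_biUnion_le)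
    have h2 : ((bad.card : ℝ)) * t ^ B
        ≤ ∑ v ∈ (Finset.univ.filter fun v : Fin k → ZMod r => v ≠ 0),
            ((Finset.univ.filter fun W : Fin q → Fin k → ZMod r => B < Z W v).card : ℝ) * t ^ B := by
      rw [← Finset.sum_mul]
      apply mul_le_mul_of_nonneg_right _ (le_of_lt htB)
      exact_mod_cast h1
    have h3 : ∑ v ∈ (Finset.univ.filter fun v : Fin k → ZMod r => v ≠ 0),
        ((Finset.univ.filter fun W : Fin q → Fin k → ZMod r => B < Z W v).card : ℝ) * t ^ B
        ≤ ∑ _v ∈ (Finset.univ.filter fun v : Fin k → ZMod r => v ≠ 0), M := by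
      apply Finset.sum_le_sum
      intro v hv
      exact key v (Finset.mem_filter.1 hv).2
    have hcardne : (Finset.univ.filter fun v : Fin k → ZMod r => v ≠ 0).card = r ^ k - 1 := by
      rw [Finset.filter_ne']
      rw [Finset.card_erase_of_mem (Finset.mem_univ _)]
      rw [Finset.card_univ]
      simp [Fintype.card_fun, ZMod.card]
    have h4 : ∑ _v ∈ (Finset.univ.filter fun v : Fin k → ZMod r => v ≠ 0), M
        = ((r:ℝ)^k - 1) * M := by
      rw [Finset.sum_const, hcardne, nsmul_eq_mul]
      congr 1
      have : (1:ℕ) ≤ r ^ k := Nat.one_le_pow _ _ hr.pos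
      push_cast [Nat.cast_sub this]
      ring
    linarith
  -- strict comparison
  have hstrict : ((r:ℝ)^k - 1) * M < ((r:ℝ)^k)^q * t ^ B := by
    have h1 : (r:ℝ)^k * M ≤ ((r:ℝ)^k)^q * t ^ B := by
      have h2 : ((r:ℝ)^(k-1))^q * (r:ℝ)^q * ((r:ℝ)^k * (1 + (t-1)/r)^q)
          ≤ ((r:ℝ)^(k-1))^q * (r:ℝ)^q * (t ^ B) := by
        apply mul_le_mul_of_nonneg_left hmain (by positivity)
      have h3 : ((r:ℝ)^(k-1))^q * (r:ℝ)^q = ((r:ℝ)^k)^q := by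
        rw [← mul_pow, ← pow_succ, Nat.sub_add_cancel hk1]
      have h4 : ((r:ℝ)^(k-1))^q * (r:ℝ)^q * ((r:ℝ)^k * (1 + (t-1)/r)^q)
          = (r:ℝ)^k * M := by
        rw [hM, mul_pow]
        have h5 : ((r:ℝ) * (1 + (t-1)/r)) = t + r - 1 := by
          field_simp
          ring
        rw [← h5, mul_pow]
        ring
      rw [h4, h3] at h2
      exact h2
    have h6 : ((r:ℝ)^k - 1) * M < (r:ℝ)^k * M := by
      apply mul_lt_mul_of_pos_right _ hM0
      linarith
    linarith
  -- extract a good W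
  have hcardW : (Fintype.card (Fin q → Fin k → ZMod r) : ℝ) = ((r:ℝ)^k)^q := by
    have h0 : Fintype.card (Fin q → Fin k → ZMod r) = (r^k)^q := by
      simp [Fintype.card_fun, ZMod.card]
    rw [h0]
    push_cast
    ring
  have hlt : bad.card < Fintype.card (Fin q → Fin k → ZMod r) := by
    have h1 : (bad.card : ℝ) * t ^ B < (Fintype.card (Fin q → Fin k → ZMod r) : ℝ) * t ^ B := by
      rw [hcardW]
      exact lt_of_le_of_lt hbadcard hstrict
    have h2 : (bad.card : ℝ) < Fintype.card (Fin q → Fin k → ZMod r) :=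
      lt_of_mul_lt_mul_right h1 (le_of_lt htB)
    exact_mod_cast h2
  have hcompl : (badᶜ : Finset (Fin q → Fin k → ZMod r)).Nonempty := by
    rw [← Finset.card_pos, Finset.card_compl]
    omega
  obtain ⟨W, hWmem⟩ := hcompl
  have hW : W ∉ bad := Finset.mem_compl.1 hWmem
  refine ⟨W, ?_⟩
  intro v hv
  by_contra hcon
  push_neg at hcon
  apply hW
  rw [hbad, Finset.mem_filter]
  exact ⟨Finset.mem_univ _, v, hv, hcon⟩


end ShadowAux

open ShadowAux in
/-- **Main theorem.** For any prime power `q ≥ 3`, prime `r ∣ q−1`,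
`ε ∈ (0,1/2)` and `q > 6^{1/ε}`, there is an `F_r`-linear code of length `q`,
dimension `⌊q^{1/2−ε}⌋`, and minimum distance at least `(r−1)q/r − 2q^{1−ε}`. -/
theorem main_shadow_code_exists
    (ε : ℝ) (hε : ε ∈ Set.Ioo (0 : ℝ) (1 / 2))
    (q r : ℕ) (hq3 : 3 ≤ q) (hpp : ∃ p k : ℕ, p.Prime ∧ 0 < k ∧ q = p ^ k)
    (hr : r.Prime) (hdvd : r ∣ q - 1)
    (hq : (q : ℝ) > 6 ^ (1 / ε)) :
    ∃ C : Submodule (ZMod r) (Fin q → ZMod r),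
      Module.finrank (ZMod r) C = ⌊(q : ℝ) ^ ((1 : ℝ) / 2 - ε)⌋₊
      ∧ ∀ c ∈ C, ∀ c' ∈ C, c ≠ c' →
          ((r : ℝ) - 1) * q / r - 2 * (q : ℝ) ^ ((1 : ℝ) - ε)
            ≤ (hammingDist c c' : ℝ) := by
  classical
  obtain ⟨hε0, hε12⟩ := hε
  haveI := Fact.mk hr
  haveI : NeZero r := ⟨hr.ne_zero⟩
  have hr2 : 2 ≤ r := hr.two_le
  have hrpos : (0:ℝ) < r := by
    have := hr.pos; positivity
  have hQ0 : (0:ℝ) < q := by positivity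
  have hQ1 : (1:ℝ) < q := by
    have : (3:ℝ) ≤ q := by exact_mod_cast hq3
    linarith
  -- a := q^ε > 6
  set a : ℝ := (q:ℝ) ^ ε with hadef
  have ha0 : 0 < a := Real.rpow_pos_of_pos hQ0 ε
  have ha6 : 6 < a := by
    have h1 : ((6:ℝ) ^ (1/ε)) ^ ε < (q:ℝ) ^ ε :=
      Real.rpow_lt_rpow (by positivity) hq hε0
    have h2 : ((6:ℝ) ^ (1/ε)) ^ ε = 6 := by
      rw [← Real.rpow_mul (by norm_num : (0:ℝ) ≤ 6), one_div,
        inv_mul_cancel₀ (ne_of_gt hε0), Real.rpow_one]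
    rw [h2] at h1
    exact h1
  -- s := q^(1/2)
  set s : ℝ := (q:ℝ) ^ ((1:ℝ)/2) with hsdef
  have hs0 : 0 < s := Real.rpow_pos_of_pos hQ0 _
  have hsq : s * s = q := by
    rw [hsdef, ← Real.rpow_add hQ0]
    norm_num
  -- k := ⌊q^(1/2-ε)⌋₊
  set k : ℕ := ⌊(q:ℝ) ^ ((1:ℝ)/2 - ε)⌋₊ with hkdef
  have hsa : (q:ℝ) ^ ((1:ℝ)/2 - ε) = s / a := by
    rw [hsdef, hadef, ← Real.rpow_sub hQ0]
  have hk_le : (k:ℝ) ≤ s / a := by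
    rw [← hsa]
    exact Nat.floor_le (by positivity)
  have hka : (k:ℝ) * a ≤ s := by
    rw [← le_div_iff₀ ha0]
    exact hk_le
  have hk1 : 1 ≤ k := by
    rw [hkdef]
    apply Nat.le_floor
    rw [Nat.cast_one]
    apply Real.one_le_rpow (le_of_lt hQ1) (by linarith)
  -- r ≤ q
  have hrq : (r:ℝ) ≤ q := by
    have h1 : r ≤ q - 1 := Nat.le_of_dvd (by omega) hdvd
    have h2 : r ≤ q := by omega
    exact_mod_cast h2
  -- B
  set B : ℝ := (q:ℝ)/r + 2 * ((q:ℝ)/a) with hBdef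
  have hB0 : 0 ≤ B := by rw [hBdef]; positivity
  have hBq : B < q := by
    have h1 : (q:ℝ)/r ≤ q/2 := by
      apply div_le_div_of_nonneg_left (le_of_lt hQ0) (by norm_num) (by exact_mod_cast hr2)
    have h2 : 2 * ((q:ℝ)/a) < 2 * (q/6) := by
      apply mul_lt_mul_of_pos_left _ (by norm_num)
      apply div_lt_div_of_pos_left hQ0 (by norm_num) ha6
    rw [hBdef]
    nlinarith
  -- get t and a good W
  obtain ⟨t, ht1, hmain⟩ := master hr2 hrq ha0 hs0 hsq hka hBdef
  obtain ⟨W, hW⟩ := exists_good_W hr hk1 hB0 ht1 hmain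
  -- the linear code
  let φ : (Fin k → ZMod r) →ₗ[ZMod r] (Fin q → ZMod r) :=
    { toFun := fun v i => ∑ j, W i j * v j
      map_add' := by
        intro v v'
        funext i
        simp [Pi.add_apply, mul_add, Finset.sum_add_distrib]
      map_smul' := by
        intro c v
        funext i
        simp [Pi.smul_apply, smul_eq_mul, Finset.mul_sum]
        apply Finset.sum_congr rfl
        intro j _
        ring }
  have hφ : ∀ (v : Fin k → ZMod r) (i : Fin q), φ v i = ∑ j, W i j * v j := fun _ _ => rfl
  -- injectivity
  have hinj : Function.Injective φ := by
    rw [← LinearMap.ker_eq_bot]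
    rw [Submodule.eq_bot_iff]
    intro v hv
    by_contra hv0
    have hzero : ∀ i : Fin q, ∑ j, W i j * v j = 0 := by
      intro i
      have : φ v = 0 := hv
      have := congrFun this i
      simpa [hφ] using this
    have hfull : (Finset.univ.filter fun i : Fin q => ∑ j, W i j * v j = 0) = Finset.univ := by
      apply Finset.filter_true_of_mem
      intro i _
      exact hzero i
    have := hW v hv0
    rw [hfull, Finset.card_univ, Fintype.card_fin] at this
    linarith
  refine ⟨LinearMap.range φ, ?_, ?_⟩
  · rw [LinearMap.finrank_range_of_inj hinj]
    rw [Module.finrank_pi]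
    simp [hkdef]
  · intro c hc c' hc' hne
    obtain ⟨v, hv⟩ := LinearMap.mem_range.1 hc
    obtain ⟨v', hv'⟩ := LinearMap.mem_range.1 hc'
    set d : Fin k → ZMod r := v - v' with hd
    have hd0 : d ≠ 0 := by
      intro h
      apply hne
      have : v = v' := by
        have := sub_eq_zero.1 (h ▸ rfl : v - v' = 0)
        exact this
      rw [← hv, ← hv', this]
    have hφd : ∀ i, (c : Fin q → ZMod r) i - c' i = ∑ j, W i j * d j := by
      intro i
      rw [← hv, ← hv', ← hφ d i, hd, map_sub]
      rfl
    -- Hamming distance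
    have hfiltereq : (Finset.univ.filter fun i : Fin q => ¬(∑ j, W i j * d j = 0))
        = Finset.univ.filter fun i : Fin q => c i ≠ c' i := by
      apply Finset.filter_congr
      intro i _
      rw [← hφd i]
      simp [sub_eq_zero]
    have hZle : (Finset.univ.filter fun i : Fin q => ∑ j, W i j * d j = 0).card ≤ q := by
      calc (Finset.univ.filter fun i : Fin q => ∑ j, W i j * d j = 0).card
          ≤ (Finset.univ : Finset (Fin q)).card := Finset.card_filter_le _ _
        _ = q := by rw [Finset.card_univ, Fintype.card_fin]
    have hdn : hammingDist c c'
        = q - (Finset.univ.filter fun i : Fin q => ∑ j, W i j * d j = 0).card := by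
      have e1 : hammingDist c c'
          = (Finset.univ.filter fun i : Fin q => ¬(∑ j, W i j * d j = 0)).card := by
        unfold hammingDist
        rw [hfiltereq]
      rw [e1, Finset.filter_not, Finset.card_sdiff_of_subset (Finset.filter_subset _ _),
        Finset.card_univ, Fintype.card_fin]
    have hdist : (hammingDist c c' : ℝ) = (q:ℝ) -
        ((Finset.univ.filter fun i : Fin q => ∑ j, W i j * d j = 0).card : ℝ) := by
      rw [hdn, Nat.cast_sub hZle]
    have hZB := hW d hd0
    rw [hdist]
    have hq1e : (q:ℝ) ^ ((1:ℝ) - ε) = (q:ℝ)/a := by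
      rw [hadef, Real.rpow_sub hQ0, Real.rpow_one]
    rw [hq1e]
    have hfinal : ((r:ℝ) - 1) * q / r = (q:ℝ) - q/r := by
      field_simp
    rw [hfinal]
    have : (q:ℝ) - B ≤ (q:ℝ) -
        ((Finset.univ.filter fun i : Fin q => ∑ j, W i j * d j = 0).card : ℝ) := by
      linarith
    rw [hBdef] at this
    linarith
end

section
/- Let ε ∈ (0,1/2). There is a constant C(ε) = 6^{1/ε} such that for any odd prime power q ≥ C(ε), there exists an F_2-linear code of length q, dimension ⌊q^{1/2−ε}⌋, and minimum distance at least q/2 − 2q^{1−ε}. -/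
private lemma zmod2_eq_of_ne : ∀ {a b c : ZMod 2}, a ≠ c → b ≠ c → a = b := by decide

private lemma zmod2_cases : ∀ a : ZMod 2, a = 0 ∨ a = 1 := by decide

private lemma zmod2_neg : ∀ a : ZMod 2, -a = a := by decide

private lemma hamming_ball_card (n m : ℕ) (w : Fin n → ZMod 2) :
    (Finset.univ.filter (fun v : Fin n → ZMod 2 => hammingDist v w ≤ m)).card
      ≤ ∑ i ∈ Finset.range (m + 1), n.choose i := by
  have h1 : (Finset.univ.filter (fun v : Fin n → ZMod 2 => hammingDist v w ≤ m)).card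
      ≤ (Finset.univ.filter (fun s : Finset (Fin n) => s.card ≤ m)).card := by
    apply Finset.card_le_card_of_injOn (fun v => Finset.univ.filter (fun j => v j ≠ w j))
    · intro v hv
      simp only [Finset.mem_coe, Finset.mem_filter, Finset.mem_univ, true_and] at hv ⊢
      exact hv
    · intro v hv v' hv' hvv'
      have hvv : Finset.univ.filter (fun j => v j ≠ w j)
          = Finset.univ.filter (fun j => v' j ≠ w j) := hvv'
      funext j
      by_cases hj : v j ≠ w j
      · have hj' : j ∈ Finset.univ.filter (fun j => v' j ≠ w j) := by
          rw [← hvv]; simp [hj]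
        simp only [Finset.mem_filter, Finset.mem_univ, true_and] at hj'
        exact zmod2_eq_of_ne hj hj'
      · push_neg at hj
        have hnot : j ∉ Finset.univ.filter (fun j => v j ≠ w j) := by simp [hj]
        rw [hvv] at hnot
        simp only [Finset.mem_filter, Finset.mem_univ, true_and, not_not] at hnot
        rw [hj, hnot]
  have h2 : (Finset.univ.filter (fun s : Finset (Fin n) => s.card ≤ m))
      ⊆ (Finset.range (m + 1)).biUnion (fun i => Finset.powersetCard i Finset.univ) := by
    intro s hs
    simp only [Finset.mem_filter, Finset.mem_univ, true_and] at hs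
    exact Finset.mem_biUnion.2 ⟨s.card, Finset.mem_range.2 (by omega),
      Finset.mem_powersetCard.2 ⟨Finset.subset_univ s, rfl⟩⟩
  calc _ ≤ _ := h1
    _ ≤ ((Finset.range (m + 1)).biUnion (fun i => Finset.powersetCard i Finset.univ)).card :=
        Finset.card_le_card h2
    _ ≤ ∑ i ∈ Finset.range (m + 1), (Finset.powersetCard i (Finset.univ : Finset (Fin n))).card :=
        Finset.card_biUnion_le
    _ = ∑ i ∈ Finset.range (m + 1), n.choose i := by
        refine Finset.sum_congr rfl fun i _ => ?_
        rw [Finset.card_powersetCard, Finset.card_univ, Fintype.card_fin]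

private lemma sum_choose_mul_pow_le (n m : ℕ) (hm : m ≤ n) (x : ℝ) (hx0 : 0 < x) (hx1 : x ≤ 1) :
    (∑ i ∈ Finset.range (m + 1), (n.choose i : ℝ)) * x ^ m ≤ (1 + x) ^ n := by
  have h1 : (∑ i ∈ Finset.range (m + 1), (n.choose i : ℝ)) * x ^ m
      = ∑ i ∈ Finset.range (m + 1), (n.choose i : ℝ) * x ^ m := Finset.sum_mul ..
  have h2 : ∑ i ∈ Finset.range (m + 1), (n.choose i : ℝ) * x ^ m
      ≤ ∑ i ∈ Finset.range (m + 1), (n.choose i : ℝ) * x ^ i := by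
    refine Finset.sum_le_sum fun i hi => ?_
    have hxi : x ^ m ≤ x ^ i :=
      pow_le_pow_of_le_one hx0.le hx1 (Nat.lt_succ_iff.1 (Finset.mem_range.1 hi))
    exact mul_le_mul_of_nonneg_left hxi (Nat.cast_nonneg _)
  have h3 : ∑ i ∈ Finset.range (m + 1), (n.choose i : ℝ) * x ^ i
      ≤ ∑ i ∈ Finset.range (n + 1), (n.choose i : ℝ) * x ^ i := by
    refine Finset.sum_le_sum_of_subset_of_nonneg (Finset.range_subset_range.2 (by omega))
      fun i _ _ => by positivity
  have h4 : (1 + x) ^ n = ∑ i ∈ Finset.range (n + 1), (n.choose i : ℝ) * x ^ i := by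
    rw [show (1 : ℝ) + x = x + 1 by ring, add_pow]
    exact Finset.sum_congr rfl fun i _ => by rw [one_pow]; ring
  rw [h1, h4]; exact le_trans h2 h3

private lemma one_add_exp_neg_le (y : ℝ) :
    1 + Real.exp (-y) ≤ 2 * Real.exp (-(y / 2) + y ^ 2 / 8) := by
  have h := Real.cosh_le_exp_half_sq (y / 2)
  rw [Real.cosh_eq] at h
  have h2 : Real.exp (-(y / 2)) * (Real.exp (y / 2) + Real.exp (-(y / 2)))
      = 1 + Real.exp (-y) := by
    rw [mul_add, ← Real.exp_add, ← Real.exp_add, show -(y / 2) + y / 2 = 0 by ring,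
      show -(y / 2) + -(y / 2) = -y by ring, Real.exp_zero]
  rw [← h2, Real.exp_add, show y ^ 2 / 8 = (y / 2) ^ 2 / 2 by ring]
  nlinarith [Real.exp_pos (-(y / 2))]

private lemma master (ε : ℝ) (hε : ε ∈ Set.Ioo (0 : ℝ) (1 / 2)) (q : ℕ)
    (hq : (q : ℝ) ≥ 6 ^ (1 / ε)) :
    (2 : ℝ) ^ ⌊(q : ℝ) ^ ((1 : ℝ) / 2 - ε)⌋₊ *
      (∑ i ∈ Finset.range ⌈(q : ℝ) / 2 - 2 * (q : ℝ) ^ ((1 : ℝ) - ε)⌉₊, (q.choose i : ℝ))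
      ≤ 2 ^ q := by
  obtain ⟨hε0, hε2⟩ := hε
  have hq1 : (1 : ℝ) ≤ q := by
    have h0 : (6 : ℝ) ^ (0 : ℝ) ≤ (6 : ℝ) ^ (1 / ε) :=
      Real.rpow_le_rpow_of_exponent_le (by norm_num) (by positivity)
    rw [Real.rpow_zero] at h0
    linarith
  have hq0 : (0 : ℝ) < q := by linarith
  have hqe : (6 : ℝ) ≤ (q : ℝ) ^ ε := by
    have h := Real.rpow_le_rpow (Real.rpow_nonneg (by norm_num) _) hq hε0.le
    rwa [← Real.rpow_mul (by norm_num), one_div, inv_mul_cancel₀ hε0.ne', Real.rpow_one] at h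
  set T : ℝ := 2 * (q : ℝ) ^ ((1 : ℝ) - ε) with hT
  have hrpos : (0 : ℝ) < (q : ℝ) ^ ((1 : ℝ) - ε) := Real.rpow_pos_of_pos hq0 _
  have hTpos : 0 < T := by positivity
  have hsplit : (q : ℝ) ^ ((1 : ℝ) - ε) * (q : ℝ) ^ ε = q := by
    rw [← Real.rpow_add hq0, show (1 : ℝ) - ε + ε = 1 by ring, Real.rpow_one]
  have h3T : 3 * T ≤ q := by nlinarith
  set k : ℕ := ⌊(q : ℝ) ^ ((1 : ℝ) / 2 - ε)⌋₊ with hk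
  set d : ℕ := ⌈(q : ℝ) / 2 - T⌉₊ with hdd
  have hval_pos : 0 < (q : ℝ) / 2 - T := by nlinarith
  have hd1 : 0 < d := Nat.ceil_pos.2 hval_pos
  set m : ℕ := d - 1 with hm
  have hm1 : m + 1 = d := by omega
  have hmlt : (m : ℝ) < (q : ℝ) / 2 - T := by
    have hceil : (d : ℝ) < ((q : ℝ) / 2 - T) + 1 := Nat.ceil_lt_add_one hval_pos.le
    have hcast : (m : ℝ) + 1 = (d : ℝ) := by exact_mod_cast hm1
    linarith
  have hmq : m ≤ q := by
    have : (m : ℝ) ≤ (q : ℝ) := by linarith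
    exact_mod_cast this
  set x : ℝ := Real.exp (-(4 * T / q)) with hx
  have hx0 : 0 < x := Real.exp_pos _
  have hx1 : x ≤ 1 := by
    rw [hx, Real.exp_le_one_iff]
    have : 0 ≤ 4 * T / q := by positivity
    linarith
  -- exponent algebra
  have eT : (q : ℝ) ^ ((1 : ℝ) - ε) * (q : ℝ) ^ ((1 : ℝ) - ε) = (q : ℝ) ^ ((1 : ℝ) - 2 * ε) * q := by
    rw [← Real.rpow_add hq0, show ((1 : ℝ) - ε) + ((1 : ℝ) - ε) = ((1 : ℝ) - 2 * ε) + 1 by ring,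
      Real.rpow_add hq0, Real.rpow_one]
  have E3 : 2 * T ^ 2 / q = 8 * (q : ℝ) ^ ((1 : ℝ) - 2 * ε) := by
    rw [div_eq_iff hq0.ne', hT]
    linear_combination (8 : ℝ) * eT
  have hE1 : (q : ℝ) * (-(4 * T / q / 2) + (4 * T / q) ^ 2 / 8) = -(2 * T) + 2 * T ^ 2 / q := by
    field_simp
    ring
  have hE2 : -(4 * T / q) * ((q : ℝ) / 2 - T) = -(2 * T) + 4 * T ^ 2 / q := by
    field_simp
    ring
  -- 2^k ≤ exp (8 q^(1-2ε))
  have hkfloor : (k : ℝ) ≤ (q : ℝ) ^ ((1 : ℝ) / 2 - ε) := Nat.floor_le (by positivity)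
  have hk2 : (q : ℝ) ^ ((1 : ℝ) / 2 - ε) ≤ (q : ℝ) ^ ((1 : ℝ) - 2 * ε) :=
    Real.rpow_le_rpow_of_exponent_le hq1 (by linarith)
  have hlog2 : Real.log 2 ≤ 1 := by
    have := Real.log_le_sub_one_of_pos (by norm_num : (0 : ℝ) < 2)
    linarith
  have hklog : (k : ℝ) * Real.log 2 ≤ 8 * (q : ℝ) ^ ((1 : ℝ) - 2 * ε) := by
    have hk0 : (0 : ℝ) ≤ (k : ℝ) := Nat.cast_nonneg _
    have hl0 : (0 : ℝ) ≤ Real.log 2 := Real.log_nonneg (by norm_num)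
    nlinarith [hkfloor.trans hk2, Real.rpow_pos_of_pos hq0 ((1 : ℝ) - 2 * ε)]
  have h2k : (2 : ℝ) ^ k ≤ Real.exp (8 * (q : ℝ) ^ ((1 : ℝ) - 2 * ε)) := by
    have h2e : (2 : ℝ) ^ k = Real.exp ((k : ℝ) * Real.log 2) := by
      rw [Real.exp_nat_mul, Real.exp_log (by norm_num : (0 : ℝ) < 2)]
    rw [h2e]
    exact Real.exp_le_exp.2 hklog
  -- (1+x)^q ≤ 2^q exp(q * (...))
  have hkey : 1 + x ≤ 2 * Real.exp (-(4 * T / q / 2) + (4 * T / q) ^ 2 / 8) :=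
    one_add_exp_neg_le (4 * T / q)
  have hA : (1 + x) ^ q ≤ 2 ^ q * Real.exp ((q : ℝ) * (-(4 * T / q / 2) + (4 * T / q) ^ 2 / 8)) := by
    calc (1 + x) ^ q ≤ (2 * Real.exp (-(4 * T / q / 2) + (4 * T / q) ^ 2 / 8)) ^ q :=
          pow_le_pow_left₀ (by positivity) hkey q
      _ = 2 ^ q * Real.exp ((q : ℝ) * (-(4 * T / q / 2) + (4 * T / q) ^ 2 / 8)) := by
          rw [mul_pow, ← Real.exp_nat_mul]
  -- x^m ≥ exp(-(4T/q)(q/2 - T))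
  have hxm : Real.exp (-(4 * T / q) * ((q : ℝ) / 2 - T)) ≤ x ^ m := by
    rw [hx, ← Real.exp_nat_mul]
    apply Real.exp_le_exp.2
    have hc : -(4 * T / q) ≤ 0 := by
      have : 0 ≤ 4 * T / q := by positivity
      linarith
    calc -(4 * T / q) * ((q : ℝ) / 2 - T) ≤ -(4 * T / q) * (m : ℝ) :=
          mul_le_mul_of_nonpos_left hmlt.le hc
      _ = (m : ℝ) * -(4 * T / q) := by ring
  -- main chain
  have hC : (2 : ℝ) ^ k * (1 + x) ^ q ≤ 2 ^ q * x ^ m := by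
    calc (2 : ℝ) ^ k * (1 + x) ^ q
        ≤ Real.exp (8 * (q : ℝ) ^ ((1 : ℝ) - 2 * ε)) *
            (2 ^ q * Real.exp ((q : ℝ) * (-(4 * T / q / 2) + (4 * T / q) ^ 2 / 8))) :=
          mul_le_mul h2k hA (by positivity) (le_of_lt (Real.exp_pos _))
      _ = 2 ^ q * Real.exp (8 * (q : ℝ) ^ ((1 : ℝ) - 2 * ε) +
            (q : ℝ) * (-(4 * T / q / 2) + (4 * T / q) ^ 2 / 8)) := by
          rw [Real.exp_add]; ring
      _ ≤ 2 ^ q * Real.exp (-(4 * T / q) * ((q : ℝ) / 2 - T)) := by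
          apply mul_le_mul_of_nonneg_left _ (by positivity)
          apply Real.exp_le_exp.2
          rw [hE1, hE2]
          have hE4 : 4 * T ^ 2 / (q : ℝ) = 2 * (2 * T ^ 2 / q) := by ring
          rw [hE4, E3]
          linarith
      _ ≤ 2 ^ q * x ^ m := mul_le_mul_of_nonneg_left hxm (by positivity)
  have hsum := sum_choose_mul_pow_le q m hmq x hx0 hx1
  rw [← hm1]
  have hfin : (2 : ℝ) ^ k * (∑ i ∈ Finset.range (m + 1), (q.choose i : ℝ)) * x ^ m
      ≤ 2 ^ q * x ^ m := by
    calc (2 : ℝ) ^ k * (∑ i ∈ Finset.range (m + 1), (q.choose i : ℝ)) * x ^ m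
        = (2 : ℝ) ^ k * ((∑ i ∈ Finset.range (m + 1), (q.choose i : ℝ)) * x ^ m) := by ring
      _ ≤ (2 : ℝ) ^ k * (1 + x) ^ q := mul_le_mul_of_nonneg_left hsum (by positivity)
      _ ≤ 2 ^ q * x ^ m := hC
  exact le_of_mul_le_mul_right hfin (pow_pos hx0 m)

private lemma greedy (q k d : ℕ) (hd : 1 ≤ d)
    (H : (2 : ℝ) ^ k * (∑ i ∈ Finset.range d, (q.choose i : ℝ)) ≤ 2 ^ q) :
    ∃ W : Submodule (ZMod 2) (Fin q → ZMod 2),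
      Module.finrank (ZMod 2) W = k ∧ ∀ w ∈ W, w ≠ 0 → d ≤ hammingNorm w := by
  set V : ℕ := ∑ i ∈ Finset.range d, q.choose i with hV
  suffices h : ∀ j, j ≤ k → ∃ W : Submodule (ZMod 2) (Fin q → ZMod 2),
      Module.finrank (ZMod 2) W = j ∧ ∀ w ∈ W, w ≠ 0 → d ≤ hammingNorm w from h k le_rfl
  intro j
  induction j with
  | zero =>
    exact fun _ => ⟨⊥, by simp, fun w hw hw0 => absurd ((Submodule.mem_bot _).1 hw) hw0⟩
  | succ i ih =>
    intro hik
    classical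
    obtain ⟨W, hWrank, hWmin⟩ := ih (Nat.le_of_succ_le hik)
    have hVpos : 0 < V := by
      rw [hV]
      calc 0 < q.choose 0 := Nat.choose_pos (Nat.zero_le q)
        _ ≤ _ := Finset.single_le_sum (f := fun i => q.choose i)
            (fun i _ => Nat.zero_le _) (Finset.mem_range.2 hd)
    -- cardinality of W
    set WF : Finset (Fin q → ZMod 2) := Finset.univ.filter (fun w => w ∈ W) with hWF
    have hWcard : WF.card = 2 ^ i := by
      have h1 : WF.card = Fintype.card {x : Fin q → ZMod 2 // x ∈ W} :=
        (Fintype.card_subtype _).symm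
      have h2 := Module.card_eq_pow_finrank (K := ZMod 2) (V := ↥W)
      rw [ZMod.card, hWrank] at h2
      rw [h1, ← h2]
    -- counting bound in ℕ
    have hcount : 2 ^ i * V < 2 ^ q := by
      have hr : ((2 : ℝ)) ^ i * (V : ℝ) < 2 ^ q := by
        have h2i : (2 : ℝ) ^ i < 2 ^ k := by
          apply pow_lt_pow_right₀ (by norm_num) hik
        have hV0 : (0 : ℝ) < (V : ℝ) := by exact_mod_cast hVpos
        have hVc : ((V : ℕ) : ℝ) = ∑ x ∈ Finset.range d, (q.choose x : ℝ) := by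
          rw [hV]; push_cast; ring
        rw [← hVc] at H
        have hmul := mul_lt_mul_of_pos_right h2i hV0
        linarith
      have : ((2 ^ i * V : ℕ) : ℝ) < ((2 ^ q : ℕ) : ℝ) := by push_cast; linarith
      exact_mod_cast this
    -- find a far-away vector
    have hfar : ∃ v : Fin q → ZMod 2, ∀ w ∈ W, ¬ hammingDist v w ≤ d - 1 := by
      by_contra hcon
      push_neg at hcon
      have hcover : (Finset.univ : Finset (Fin q → ZMod 2)) ⊆
          WF.biUnion
            (fun w => Finset.univ.filter (fun v => hammingDist v w ≤ d - 1)) := by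
        intro v _
        obtain ⟨w, hwW, hwd⟩ := hcon v
        exact Finset.mem_biUnion.2 ⟨w, by simp [hWF, hwW], by simp [hwd]⟩
      have hcard : 2 ^ q ≤ 2 ^ i * V := by
        calc 2 ^ q = (Finset.univ : Finset (Fin q → ZMod 2)).card := by
              rw [Finset.card_univ, Fintype.card_fun, ZMod.card, Fintype.card_fin]
          _ ≤ _ := Finset.card_le_card hcover
          _ ≤ ∑ w ∈ WF,
                (Finset.univ.filter (fun v => hammingDist v w ≤ d - 1)).card :=
              Finset.card_biUnion_le
          _ ≤ ∑ _w ∈ WF, V := by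
              refine Finset.sum_le_sum fun w _ => ?_
              have := hamming_ball_card q (d - 1) w
              rwa [Nat.sub_add_cancel hd] at this
          _ = 2 ^ i * V := by rw [Finset.sum_const, hWcard, smul_eq_mul]
      omega
    obtain ⟨v, hv⟩ := hfar
    have hvW : v ∉ W := fun hvW => hv v hvW (by simp)
    have hv0 : v ≠ 0 := fun h0 => hvW (h0 ▸ W.zero_mem)
    refine ⟨W ⊔ Submodule.span (ZMod 2) {v}, ?_, ?_⟩
    · have hinf : W ⊓ Submodule.span (ZMod 2) {v} = ⊥ := by
        rw [eq_bot_iff]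
        rintro z ⟨hzW, hzv⟩
        obtain ⟨a, rfl⟩ := Submodule.mem_span_singleton.1 hzv
        rcases zmod2_cases a with rfl | rfl
        · simp
        · rw [one_smul] at hzW
          exact absurd hzW hvW
      have := Submodule.finrank_sup_add_finrank_inf_eq W (Submodule.span (ZMod 2) {v})
      rw [hinf, hWrank, finrank_span_singleton hv0, finrank_bot] at this
      omega
    · intro z hz hz0
      obtain ⟨w, hwW, u, huv, rfl⟩ := Submodule.mem_sup.1 hz
      obtain ⟨a, rfl⟩ := Submodule.mem_span_singleton.1 huv
      rcases zmod2_cases a with rfl | rfl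
      · rw [zero_smul, add_zero] at hz0 ⊢
        exact hWmin w hwW hz0
      · rw [one_smul]
        have hdist := hv w hwW
        have hnorm : hammingNorm (w + v) = hammingDist v w := by
          rw [hammingDist_eq_hammingNorm]
          congr 1
          funext j
          simp [sub_eq_add_neg, zmod2_neg, add_comm]
        rw [hnorm]
        omega

/-- **binary case.** For any `ε ∈ (0,1/2)` and any odd prime power
`q ≥ 6^{1/ε}`, there exists an `F_2`-linear code of length `q`, dimension
`⌊q^{1/2−ε}⌋`, and minimum distance at least `q/2 − 2q^{1−ε}`. -/
theorem binary_shadow_code_exists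
    (ε : ℝ) (hε : ε ∈ Set.Ioo (0 : ℝ) (1 / 2))
    (q : ℕ) (hodd : Odd q) (hpp : ∃ p k : ℕ, p.Prime ∧ 0 < k ∧ q = p ^ k)
    (hq : (q : ℝ) ≥ 6 ^ (1 / ε)) :
    ∃ C : Submodule (ZMod 2) (Fin q → ZMod 2),
      Module.finrank (ZMod 2) C = ⌊(q : ℝ) ^ ((1 : ℝ) / 2 - ε)⌋₊
      ∧ ∀ c ∈ C, ∀ c' ∈ C, c ≠ c' →
          (q : ℝ) / 2 - 2 * (q : ℝ) ^ ((1 : ℝ) - ε) ≤ (hammingDist c c' : ℝ) := by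
  obtain ⟨hε0, hε2⟩ := hε
  have hq1 : (1 : ℝ) ≤ q := by
    have h0 : (6 : ℝ) ^ (0 : ℝ) ≤ (6 : ℝ) ^ (1 / ε) :=
      Real.rpow_le_rpow_of_exponent_le (by norm_num) (by positivity)
    rw [Real.rpow_zero] at h0
    linarith
  have hq0 : (0 : ℝ) < q := by linarith
  have hqe : (6 : ℝ) ≤ (q : ℝ) ^ ε := by
    have h := Real.rpow_le_rpow (Real.rpow_nonneg (by norm_num) _) hq hε0.le
    rwa [← Real.rpow_mul (by norm_num), one_div, inv_mul_cancel₀ hε0.ne', Real.rpow_one] at h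
  have hrpos : (0 : ℝ) < (q : ℝ) ^ ((1 : ℝ) - ε) := Real.rpow_pos_of_pos hq0 _
  have hsplit : (q : ℝ) ^ ((1 : ℝ) - ε) * (q : ℝ) ^ ε = q := by
    rw [← Real.rpow_add hq0, show (1 : ℝ) - ε + ε = 1 by ring, Real.rpow_one]
  have hval_pos : 0 < (q : ℝ) / 2 - 2 * (q : ℝ) ^ ((1 : ℝ) - ε) := by nlinarith
  have hd1 : 1 ≤ ⌈(q : ℝ) / 2 - 2 * (q : ℝ) ^ ((1 : ℝ) - ε)⌉₊ := Nat.ceil_pos.2 hval_pos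
  have H := master ε ⟨hε0, hε2⟩ q hq
  obtain ⟨W, hrank, hmin⟩ :=
    greedy q ⌊(q : ℝ) ^ ((1 : ℝ) / 2 - ε)⌋₊ ⌈(q : ℝ) / 2 - 2 * (q : ℝ) ^ ((1 : ℝ) - ε)⌉₊ hd1 H
  refine ⟨W, hrank, ?_⟩
  intro c hc c' hc' hne
  have hsub : c - c' ∈ W := W.sub_mem hc hc'
  have hne0 : c - c' ≠ 0 := sub_ne_zero.2 hne
  have hdle := hmin _ hsub hne0
  rw [sub_eq_neg_add c c', ← hammingDist_eq_hammingNorm, hammingDist_comm] at hdle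
  have hcast : (⌈(q : ℝ) / 2 - 2 * (q : ℝ) ^ ((1 : ℝ) - ε)⌉₊ : ℝ) ≤ (hammingDist c c' : ℝ) := by
    exact_mod_cast hdle
  calc (q : ℝ) / 2 - 2 * (q : ℝ) ^ ((1 : ℝ) - ε)
      ≤ (⌈(q : ℝ) / 2 - 2 * (q : ℝ) ^ ((1 : ℝ) - ε)⌉₊ : ℝ) := Nat.le_ceil _
    _ ≤ _ := hcast
end
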